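/- For the function a(z,λ,μ) = ((1-μ/z)/(1+μ/z))·((1+λ/z)/(1-λ/z)) - ((1-z/μ)/(1+z/μ))·((1+z/λ)/(1-z/λ)), where the first term is expanded as a series in 1/z and the second as a series in z, one has the identity a(z,λ,μ) = ((1+λ/z)/(1+μ/z))(z-μ)δ(z,λ) + (μ/λ)((1-z/μ)/(1-z/λ))(z+λ)δ(z,-μ), where δ(z,λ) = (z(1-λ/z))^{-1} + (λ(1-z/λ))^{-1} is the formal delta function. -/

import Mathlib

/-!
Formal distributions in `z` with coefficients Laurent polynomials/series in
`λ, μ` are modelled as functions `ℤ → ℤ → ℤ → ℚ` of the three exponents: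
`F a b c` is the coefficient of `z^a λ^b μ^c`.  Products are convolutions
(expressed with `∑ᶠ`; all the sums occurring in the statement below are
pointwise finite).  Each rational expression is encoded by the coefficients
of its expansion in the indicated domain:
* factors with `z` in the denominator are expanded as series in `1/z`,
* factors with `z` in the numerator as series in `z`,
using `1/(1-cx) = ∑_{n≥0} c^n x^n`.
-/

noncomputable section

/-- Trivariate formal distributions: coefficient functions of `z^a λ^b μ^c`. -/
abbrev D3 := ℤ → ℤ → ℤ → ℚ

/-- Convolution product of trivariate formal distributions. -/
def mul3 (f g : D3) : D3 := fun a b c =>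
  ∑ᶠ p : ℤ × ℤ × ℤ, f p.1 p.2.1 p.2.2 * g (a - p.1) (b - p.2.1) (c - p.2.2)

/-- `(1-μ/z)/(1+μ/z)` expanded in `1/z`:  `1 + 2∑_{n≥1} (-1)^n μ^n z^{-n}`. -/
def sA : D3 := fun a b c =>
  if a ≤ 0 ∧ b = 0 ∧ c = -a then (if a = 0 then 1 else 2 * (-1 : ℚ) ^ a.natAbs) else 0

/-- `(1+λ/z)/(1-λ/z)` expanded in `1/z`:  `1 + 2∑_{n≥1} λ^n z^{-n}`. -/
def sB : D3 := fun a b c =>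
  if a ≤ 0 ∧ b = -a ∧ c = 0 then (if a = 0 then 1 else 2) else 0

/-- `(1-z/μ)/(1+z/μ)` expanded in `z`:  `1 + 2∑_{n≥1} (-1)^n μ^{-n} z^n`. -/
def sC : D3 := fun a b c =>
  if 0 ≤ a ∧ b = 0 ∧ c = -a then (if a = 0 then 1 else 2 * (-1 : ℚ) ^ a.natAbs) else 0

/-- `(1+z/λ)/(1-z/λ)` expanded in `z`:  `1 + 2∑_{n≥1} λ^{-n} z^n`. -/
def sD : D3 := fun a b c =>
  if 0 ≤ a ∧ b = -a ∧ c = 0 then (if a = 0 then 1 else 2) else 0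

/-- `(1+λ/z)/(1+μ/z)` expanded in `1/z`:
coefficient of `z^{-n}` is `(-1)^n μ^n + (-1)^{n-1} λ μ^{n-1}` (`n ≥ 1`). -/
def sP1 : D3 := fun a b c =>
  if a ≤ 0 ∧ b = 0 ∧ c = -a then (-1 : ℚ) ^ a.natAbs
  else if a ≤ -1 ∧ b = 1 ∧ c = -a - 1 then (-1 : ℚ) ^ (a + 1).natAbs
  else 0

/-- `(1-z/μ)/(1-z/λ)` expanded in `z`:
coefficient of `z^n` is `λ^{-n} - μ^{-1} λ^{-(n-1)}` (`n ≥ 1`). -/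
def sP2 : D3 := fun a b c =>
  if 0 ≤ a ∧ b = -a ∧ c = 0 then 1
  else if 1 ≤ a ∧ b = -(a - 1) ∧ c = -1 then -1
  else 0

/-- The formal delta function `δ(z,λ) = ∑_{m∈ℤ} z^m λ^{-m-1}`. -/
def deltaL : D3 := fun a b c => if b = -a - 1 ∧ c = 0 then 1 else 0

/-- The formal delta function `δ(z,-μ) = ∑_{m∈ℤ} z^m (-μ)^{-m-1}`. -/
def deltaMneg : D3 := fun a b c =>
  if b = 0 ∧ c = -a - 1 then (-1 : ℚ) ^ (a + 1).natAbs else 0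

/-- The monomial `z - μ`. -/
def zSubMu : D3 := fun a b c =>
  if a = 1 ∧ b = 0 ∧ c = 0 then 1 else if a = 0 ∧ b = 0 ∧ c = 1 then -1 else 0

/-- The monomial `z + λ`. -/
def zAddLam : D3 := fun a b c =>
  if a = 1 ∧ b = 0 ∧ c = 0 then 1 else if a = 0 ∧ b = 1 ∧ c = 0 then 1 else 0

/-- The monomial `μ/λ`. -/
def muDivLam : D3 := fun a b c => if a = 0 ∧ b = -1 ∧ c = 1 then 1 else 0

/-- The identity
`a(z,λ,μ) = ((1-μ/z)/(1+μ/z))((1+λ/z)/(1-λ/z)) - ((1-z/μ)/(1+z/μ))((1+z/λ)/(1-z/λ))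
 = ((1+λ/z)/(1+μ/z))(z-μ)δ(z,λ) + (μ/λ)((1-z/μ)/(1-z/λ))(z+λ)δ(z,-μ)`
as formal distributions in `z` with Laurent coefficients in `λ, μ`. -/
-- helpers
lemma prod3_ext {x y z : ℤ} {p : ℤ × ℤ × ℤ} (h1 : x = p.1) (h2 : y = p.2.1) (h3 : z = p.2.2) :
    (x, y, z) = p := by subst h1; subst h2; subst h3; rfl

lemma finsum3_single (f : ℤ × ℤ × ℤ → ℚ) (p : ℤ × ℤ × ℤ)
    (h : ∀ x y z, ¬(x = p.1 ∧ y = p.2.1 ∧ z = p.2.2) → f (x, y, z) = 0) :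
    ∑ᶠ q, f q = f p := by
  refine finsum_eq_single f p ?_
  rintro ⟨x, y, z⟩ hx
  exact h x y z fun ⟨h1, h2, h3⟩ => hx (prod3_ext h1 h2 h3)

lemma finsum3_pair (f : ℤ × ℤ × ℤ → ℚ) (p q : ℤ × ℤ × ℤ) (hpq : p ≠ q)
    (h : ∀ x y z, ¬(x = p.1 ∧ y = p.2.1 ∧ z = p.2.2) →
      ¬(x = q.1 ∧ y = q.2.1 ∧ z = q.2.2) → f (x, y, z) = 0) :
    ∑ᶠ r, f r = f p + f q := by
  have hsub : Function.support f ⊆ (↑({p, q} : Finset (ℤ × ℤ × ℤ)) : Set (ℤ × ℤ × ℤ)) := by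
    rintro ⟨x, y, z⟩ hx
    simp only [Finset.coe_insert, Finset.coe_singleton, Set.mem_insert_iff,
      Set.mem_singleton_iff]
    by_contra hc
    push_neg at hc
    exact hx (h x y z (fun ⟨h1, h2, h3⟩ => hc.1 (prod3_ext h1 h2 h3))
      (fun ⟨h1, h2, h3⟩ => hc.2 (prod3_ext h1 h2 h3)))
  rw [finsum_eq_finset_sum_of_support_subset f hsub, Finset.sum_pair hpq]

lemma pow_succ_natAbs (n : ℤ) : (-1 : ℚ) ^ ((n + 1).natAbs) = -(-1 : ℚ) ^ n.natAbs := by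
  rcases Int.even_or_odd n with h | h
  · have h1 : Even n.natAbs := Int.natAbs_even.mpr h
    have h2 : Odd (n + 1).natAbs := Int.natAbs_odd.mpr h.add_one
    rw [h1.neg_one_pow, h2.neg_one_pow]
  · have h1 : Odd n.natAbs := Int.natAbs_odd.mpr h
    have h2 : Even (n + 1).natAbs := Int.natAbs_even.mpr h.add_one
    rw [h1.neg_one_pow, h2.neg_one_pow]; norm_num

-- closed forms
def Q1 : D3 := fun a b c => sP1 (a - 1) b c - sP1 a b (c - 1)
def Q2 : D3 := fun a b c => sP2 (a - 1) b c + sP2 a (b - 1) c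
def T2 : D3 := fun a b c =>
  Q2 (a + c + 1) b 0 * (-1 : ℚ) ^ (-c).natAbs + Q2 (a + c + 2) b (-1) * (-1 : ℚ) ^ (-c - 1).natAbs

lemma L1 : mul3 sA sB = fun a b c => sA (-c) 0 c * sB (a + c) b 0 := by
  funext a b c
  show ∑ᶠ p : ℤ × ℤ × ℤ, _ = _
  rw [finsum3_single _ (-c, 0, c)]
  · simp only [sub_neg_eq_add, sub_zero, sub_self]
  · intro x y z hne
    replace hne : ¬(x = -c ∧ y = 0 ∧ z = c) := hne
    simp only [sA, sB]
    split_ifs <;> first | (exfalso; omega) | ring1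

lemma L2 : mul3 sC sD = fun a b c => sC (-c) 0 c * sD (a + c) b 0 := by
  funext a b c
  show ∑ᶠ p : ℤ × ℤ × ℤ, _ = _
  rw [finsum3_single _ (-c, 0, c)]
  · simp only [sub_neg_eq_add, sub_zero, sub_self]
  · intro x y z hne
    replace hne : ¬(x = -c ∧ y = 0 ∧ z = c) := hne
    simp only [sC, sD]
    split_ifs <;> first | (exfalso; omega) | ring1

lemma L3 : mul3 sP1 zSubMu = Q1 := by
  funext a b c
  show ∑ᶠ p : ℤ × ℤ × ℤ, _ = _
  rw [finsum3_pair _ (a - 1, b, c) (a, b, c - 1) (by intro h; injection h with h1 h2; omega)]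
  · show sP1 (a - 1) b c * zSubMu (a - (a - 1)) (b - b) (c - c)
        + sP1 a b (c - 1) * zSubMu (a - a) (b - b) (c - (c - 1)) = _
    rw [show a - (a - 1) = (1 : ℤ) by ring, show c - (c - 1) = (1 : ℤ) by ring,
      sub_self, sub_self, sub_self]
    simp only [Q1, zSubMu]
    norm_num
    ring
  · intro x y z hne1 hne2
    replace hne1 : ¬(x = a - 1 ∧ y = b ∧ z = c) := hne1
    replace hne2 : ¬(x = a ∧ y = b ∧ z = c - 1) := hne2
    simp only [sP1, zSubMu]
    split_ifs <;> first | (exfalso; omega) | ring1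

lemma L5 : mul3 sP2 zAddLam = Q2 := by
  funext a b c
  show ∑ᶠ p : ℤ × ℤ × ℤ, _ = _
  rw [finsum3_pair _ (a - 1, b, c) (a, b - 1, c) (by intro h; injection h with h1 h2; omega)]
  · show sP2 (a - 1) b c * zAddLam (a - (a - 1)) (b - b) (c - c)
        + sP2 a (b - 1) c * zAddLam (a - a) (b - (b - 1)) (c - c) = _
    rw [show a - (a - 1) = (1 : ℤ) by ring, show b - (b - 1) = (1 : ℤ) by ring,
      sub_self, sub_self, sub_self]
    simp only [Q2, zAddLam]
    norm_num
  · intro x y z hne1 hne2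
    replace hne1 : ¬(x = a - 1 ∧ y = b ∧ z = c) := hne1
    replace hne2 : ¬(x = a ∧ y = b - 1 ∧ z = c) := hne2
    simp only [sP2, zAddLam]
    split_ifs <;> first | (exfalso; omega) | ring1

lemma L4 : mul3 Q1 deltaL = fun a b c => Q1 (a + b + 1) 0 c + Q1 (a + b) 1 c := by
  funext a b c
  show ∑ᶠ p : ℤ × ℤ × ℤ, _ = _
  rw [finsum3_pair _ (a + b + 1, 0, c) (a + b, 1, c) (by intro h; injection h with h1 h2; omega)]
  · show Q1 (a + b + 1) 0 c * deltaL (a - (a + b + 1)) (b - 0) (c - c)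
        + Q1 (a + b) 1 c * deltaL (a - (a + b)) (b - 1) (c - c) = _
    rw [show a - (a + b + 1) = -b - 1 by ring, show a - (a + b) = -b by ring,
      sub_self, sub_zero]
    simp only [deltaL]
    rw [if_pos ⟨by ring, trivial⟩, if_pos ⟨by ring, trivial⟩]
    ring
  · intro x y z hne1 hne2
    replace hne1 : ¬(x = a + b + 1 ∧ y = 0 ∧ z = c) := hne1
    replace hne2 : ¬(x = a + b ∧ y = 1 ∧ z = c) := hne2
    simp only [Q1, sP1, deltaL]
    split_ifs <;> first | (exfalso; omega) | ring1

lemma L6 : mul3 Q2 deltaMneg = T2 := by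
  funext a b c
  show ∑ᶠ p : ℤ × ℤ × ℤ, _ = _
  rw [finsum3_pair _ (a + c + 1, b, 0) (a + c + 2, b, -1) (by intro h; injection h with h1 h2; omega)]
  · show Q2 (a + c + 1) b 0 * deltaMneg (a - (a + c + 1)) (b - b) (c - 0)
        + Q2 (a + c + 2) b (-1) * deltaMneg (a - (a + c + 2)) (b - b) (c - -1) = _
    rw [show a - (a + c + 1) = -c - 1 by ring, show a - (a + c + 2) = -c - 2 by ring,
      show c - (-1 : ℤ) = c + 1 by ring, sub_self, sub_zero]
    simp only [deltaMneg, T2]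
    rw [if_pos ⟨trivial, by ring⟩, if_pos ⟨trivial, by ring⟩,
      show (-c - 1 + 1 : ℤ) = -c by ring, show (-c - 2 + 1 : ℤ) = -c - 1 by ring]
  · intro x y z hne1 hne2
    replace hne1 : ¬(x = a + c + 1 ∧ y = b ∧ z = 0) := hne1
    replace hne2 : ¬(x = a + c + 2 ∧ y = b ∧ z = -1) := hne2
    simp only [Q2, sP2, deltaMneg]
    split_ifs <;> first | (exfalso; omega) | ring1

lemma L7 (g : D3) : mul3 muDivLam g = fun a b c => g a (b + 1) (c - 1) := by
  funext a b c
  show ∑ᶠ p : ℤ × ℤ × ℤ, _ = _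
  rw [finsum3_single _ (0, -1, 1)]
  · show muDivLam 0 (-1) 1 * g (a - 0) (b - -1) (c - 1) = _
    rw [show b - (-1 : ℤ) = b + 1 by ring, sub_zero]
    simp [muDivLam]
  · intro x y z hne
    replace hne : ¬(x = 0 ∧ y = -1 ∧ z = 1) := hne
    simp only [muDivLam]
    split_ifs <;> first | (exfalso; omega) | ring1

lemma main_scalar (a b c : ℤ) :
    sA (-c) 0 c * sB (a + c) b 0 - sC (-c) 0 c * sD (a + c) b 0
      = (Q1 (a + b + 1) 0 c + Q1 (a + b) 1 c) + T2 a (b + 1) (c - 1) := by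
  simp only [T2, Q1, Q2]
  rw [show a + (c - 1) + 1 = a + c by ring, show a + (c - 1) + 2 = a + c + 1 by ring,
    show (-(c - 1) : ℤ) = -c + 1 by ring, show (-c + 1 - 1 : ℤ) = -c by ring,
    show a + b + 1 - 1 = a + b by ring, show b + 1 - 1 = b by ring,
    show a + c + 1 - 1 = a + c by ring]
  by_cases hb : b = -a - c
  · subst hb
    rw [show a + (-a - c) = -c by ring]
    have e1 : sA (-c) 0 c = if c = 0 then 1 else if 0 ≤ c then 2 * (-1 : ℚ) ^ (-c).natAbs else 0 := by
      simp only [sA, true_and, and_true]; split_ifs <;> first | rfl | (exfalso; omega)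
    have e2 : sB (a + c) (-a - c) 0 = if a + c = 0 then 1 else if a + c ≤ 0 then 2 else 0 := by
      simp only [sB, true_and, and_true]; split_ifs <;> first | rfl | (exfalso; omega)
    have e3 : sC (-c) 0 c = if c = 0 then 1 else if c ≤ 0 then 2 * (-1 : ℚ) ^ (-c).natAbs else 0 := by
      simp only [sC, true_and, and_true]; split_ifs <;> first | rfl | (exfalso; omega)
    have e4 : sD (a + c) (-a - c) 0 = if a + c = 0 then 1 else if 0 ≤ a + c then 2 else 0 := by
      simp only [sD, true_and, and_true]; split_ifs <;> first | rfl | (exfalso; omega)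
    have e5 : sP1 (-c) 0 c = if 0 ≤ c then (-1 : ℚ) ^ (-c).natAbs else 0 := by
      simp only [sP1, true_and, and_true]; split_ifs <;> first | rfl | (exfalso; omega)
    have e6 : sP1 (-c + 1) 0 (c - 1) = if 1 ≤ c then (-1 : ℚ) ^ (-c + 1).natAbs else 0 := by
      simp only [sP1, true_and, and_true]; split_ifs <;> first | rfl | (exfalso; omega)
    have e7 : sP1 (-c - 1) 1 c = if 0 ≤ c then (-1 : ℚ) ^ (-c - 1 + 1).natAbs else 0 := by
      simp only [sP1, true_and, and_true]; split_ifs <;> first | rfl | (exfalso; omega)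
    have e8 : sP1 (-c) 1 (c - 1) = if 1 ≤ c then (-1 : ℚ) ^ (-c + 1).natAbs else 0 := by
      simp only [sP1, true_and, and_true]; split_ifs <;> first | rfl | (exfalso; omega)
    have e9 : sP2 (a + c - 1) (-a - c + 1) 0 = if 1 ≤ a + c then 1 else 0 := by
      simp only [sP2, true_and, and_true]; split_ifs <;> first | rfl | (exfalso; omega)
    have e10 : sP2 (a + c) (-a - c) 0 = if 0 ≤ a + c then 1 else 0 := by
      simp only [sP2, true_and, and_true]; split_ifs <;> first | rfl | (exfalso; omega)
    have e11 : sP2 (a + c) (-a - c + 1) (-1) = if 1 ≤ a + c then (-1 : ℚ) else 0 := by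
      simp only [sP2, true_and, and_true]; split_ifs <;> first | rfl | (exfalso; omega)
    have e12 : sP2 (a + c + 1) (-a - c) (-1) = if 0 ≤ a + c then (-1 : ℚ) else 0 := by
      simp only [sP2, true_and, and_true]; split_ifs <;> first | rfl | (exfalso; omega)
    rw [e1, e2, e3, e4, e5, e6, e7, e8, e9, e10, e11, e12,
      show (-c - 1 + 1 : ℤ) = -c by ring, pow_succ_natAbs (-c)]
    split_ifs <;> first | (exfalso; omega) | ring1 | (subst_vars; norm_num)
  · have n1 : sB (a + c) b 0 = 0 := by
      simp only [sB, true_and, and_true]; rw [if_neg (by omega)]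
    have n2 : sD (a + c) b 0 = 0 := by
      simp only [sD, true_and, and_true]; rw [if_neg (by omega)]
    have n3 : sP1 (a + b) 0 c = 0 := by
      simp only [sP1, true_and, and_true]; rw [if_neg (by omega), if_neg (by omega)]
    have n4 : sP1 (a + b + 1) 0 (c - 1) = 0 := by
      simp only [sP1, true_and, and_true]; rw [if_neg (by omega), if_neg (by omega)]
    have n5 : sP1 (a + b - 1) 1 c = 0 := by
      simp only [sP1, true_and, and_true]; rw [if_neg (by omega), if_neg (by omega)]
    have n6 : sP1 (a + b) 1 (c - 1) = 0 := by
      simp only [sP1, true_and, and_true]; rw [if_neg (by omega), if_neg (by omega)]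
    have n7 : sP2 (a + c - 1) (b + 1) 0 = 0 := by
      simp only [sP2, true_and, and_true]; rw [if_neg (by omega), if_neg (by omega)]
    have n8 : sP2 (a + c) b 0 = 0 := by
      simp only [sP2, true_and, and_true]; rw [if_neg (by omega), if_neg (by omega)]
    have n9 : sP2 (a + c) (b + 1) (-1) = 0 := by
      simp only [sP2, true_and, and_true]; rw [if_neg (by omega), if_neg (by omega)]
    have n10 : sP2 (a + c + 1) b (-1) = 0 := by
      simp only [sP2, true_and, and_true]; rw [if_neg (by omega), if_neg (by omega)]
    rw [n1, n2, n3, n4, n5, n6, n7, n8, n9, n10]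
    ring


theorem a_z_lambda_mu_identity :
    mul3 sA sB - mul3 sC sD
      = mul3 (mul3 sP1 zSubMu) deltaL
        + mul3 muDivLam (mul3 (mul3 sP2 zAddLam) deltaMneg) := by
  rw [L1, L2, L3, L4, L5, L6, L7 T2]
  funext a b c
  simp only [Pi.sub_apply, Pi.add_apply]
  exact main_scalar a b c
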